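/- arXiv:1506.05426 — 2 statements merged into one kernel-verified Lean document; each statement's English description precedes it below -/
import Mathlib

section
/- For every positive integer m and every positive integer n, H_m(n) = 1 if and only if no prime q with H_m(q) = 0 divides n. -/
open Finset

/-- The Schemmel totient function: `L m 0 = 0`, `L m 1 = 1`, and for `n > 1`,
`L m n = ∏ p^(α-1) (p - m)` over the canonical factorization of `n` if every
prime divisor of `n` exceeds `m`, and `0` otherwise. -/
def L (m n : ℕ) : ℕ :=
  if n ≤ 1 then n
  else if ∀ p ∈ n.primeFactors, m < p then
    ∏ p ∈ n.primeFactors, p ^ (n.factorization p - 1) * (p - m)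
  else 0

/-- `R m n` is the least positive `k` with `L_m^{(k)}(n) ∈ {0, 1}`. -/
noncomputable def R (m n : ℕ) : ℕ :=
  sInf {k | 0 < k ∧ ((L m)^[k] n = 0 ∨ (L m)^[k] n = 1)}

/-- `H m n = L_m^{(R_m(n))}(n)`. -/
noncomputable def H (m n : ℕ) : ℕ := (L m)^[R m n] n

/-- `D m 1 = 0` and `D m n = ∑_{i=1}^{R_m(n)} L_m^{(i)}(n)` for `n > 1`. -/
noncomputable def D (m n : ℕ) : ℕ :=
  if n = 1 then 0 else ∑ i ∈ Finset.Icc 1 (R m n), (L m)^[i] n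

lemma L_zero (m : ℕ) : L m 0 = 0 := by simp [L]

lemma L_one (m : ℕ) : L m 1 = 1 := by simp [L]

lemma L_lt (m n : ℕ) (hm : 0 < m) (hn : 2 ≤ n) : L m n < n := by
  have hn1 : ¬ n ≤ 1 := by omega
  have hn0 : n ≠ 0 := by omega
  rw [L, if_neg hn1]
  split_ifs with h
  · have hne : n.primeFactors.Nonempty := Nat.nonempty_primeFactors.2 hn
    calc ∏ p ∈ n.primeFactors, p ^ (n.factorization p - 1) * (p - m)
        < ∏ p ∈ n.primeFactors, p ^ n.factorization p := by
          apply Finset.prod_lt_prod_of_nonempty _ _ hne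
          · intro p hp
            have hpp : p.Prime := Nat.prime_of_mem_primeFactors hp
            have hpm : m < p := h p hp
            exact Nat.mul_pos (pow_pos hpp.pos _) (by omega)
          · intro p hp
            have hpp : p.Prime := Nat.prime_of_mem_primeFactors hp
            have hfp : 1 ≤ n.factorization p := (Nat.Prime.factorization_pos_of_dvd hpp hn0
              (Nat.dvd_of_mem_primeFactors hp))
            have h1 : p ^ n.factorization p = p ^ (n.factorization p - 1) * p := by
              rw [← pow_succ]; congr 1; omega
            rw [h1]
            have hpm : m < p := h p hp
            exact (Nat.mul_lt_mul_left (pow_pos hpp.pos _)).2 (by omega)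
      _ = n := by
          rw [← Nat.prod_factorization_eq_prod_primeFactors]
          exact Nat.factorization_prod_pow_eq_self hn0
  · omega

lemma iter_S (m n : ℕ) (hm : 0 < m) :
    ∃ k, 0 < k ∧ ((L m)^[k] n = 0 ∨ (L m)^[k] n = 1) := by
  induction n using Nat.strong_induction_on with
  | _ n ih =>
    rcases le_or_gt n 1 with h | h
    · refine ⟨1, one_pos, ?_⟩
      interval_cases n
      · simp [L_zero]
      · simp [L_one]
    · obtain ⟨k, hk, hk2⟩ := ih (L m n) (L_lt m n hm h)
      refine ⟨k + 1, by omega, ?_⟩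
      rwa [Function.iterate_succ_apply]

lemma H_zero (m : ℕ) : H m 0 = 0 := by
  unfold H
  exact Function.iterate_fixed (L_zero m) _

lemma H_one (m : ℕ) : H m 1 = 1 := by
  unfold H
  exact Function.iterate_fixed (L_one m) _

lemma H_mem (m n : ℕ) (hm : 0 < m) : H m n = 0 ∨ H m n = 1 := by
  have := Nat.sInf_mem (iter_S m n hm)
  exact this.2

lemma H_rec (m n : ℕ) (hm : 0 < m) (hn : 2 ≤ n) : H m n = H m (L m n) := by
  rcases le_or_gt (L m n) 1 with h | h
  · have hR : R m n = 1 := by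
      apply le_antisymm
      · apply Nat.sInf_le
        constructor
        · exact one_pos
        · simp only [Function.iterate_one]; omega
      · exact (Nat.sInf_mem (iter_S m n hm)).1
    rw [H, hR, Function.iterate_one]
    interval_cases hL : (L m n)
    · rw [H_zero]
    · rw [H_one]
  · have hR : R m n = R m (L m n) + 1 := by
      apply le_antisymm
      · apply Nat.sInf_le
        refine ⟨by omega, ?_⟩
        rw [Function.iterate_succ_apply]
        exact (Nat.sInf_mem (iter_S m (L m n) hm)).2
      · obtain ⟨hk, hk2⟩ := Nat.sInf_mem (iter_S m n hm)
        change 0 < R m n at hk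
        change (L m)^[R m n] n = 0 ∨ (L m)^[R m n] n = 1 at hk2
        obtain ⟨j, hj⟩ : ∃ j, R m n = j + 1 := ⟨R m n - 1, by omega⟩
        rw [hj, Function.iterate_succ_apply] at hk2
        have hjpos : 0 < j := by
          by_contra hj0
          have : j = 0 := by omega
          subst this
          simp only [Function.iterate_zero, id_eq] at hk2
          omega
        have : R m (L m n) ≤ j := Nat.sInf_le ⟨hjpos, hk2⟩
        omega
    rw [H, hR, Function.iterate_succ_apply, ← H]

lemma L_prime_gt (m p : ℕ) (hp : p.Prime) (h : m < p) : L m p = p - m := by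
  have h2 : ¬ p ≤ 1 := by have := hp.two_le; omega
  rw [L, if_neg h2, if_pos]
  · rw [hp.primeFactors, Finset.prod_singleton, hp.factorization]
    simp
  · intro q hq
    rw [hp.primeFactors, Finset.mem_singleton] at hq
    omega

lemma L_prime_le (m p : ℕ) (hp : p.Prime) (h : p ≤ m) : L m p = 0 := by
  have h2 : ¬ p ≤ 1 := by have := hp.two_le; omega
  rw [L, if_neg h2, if_neg]
  push_neg
  exact ⟨p, by simp [hp.primeFactors], h⟩

theorem H_eq_one_iff (m n : ℕ) (hm : 0 < m) (hn : 0 < n) :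
    H m n = 1 ↔ ∀ q : ℕ, q.Prime → H m q = 0 → ¬ q ∣ n := by
  induction n using Nat.strong_induction_on with
  | _ n ih =>
  rcases eq_or_lt_of_le (show 1 ≤ n from hn) with h1 | h2
  · rw [← h1, H_one]
    simp only [true_iff]
    intro q hq _ hdvd
    exact hq.one_lt.ne' (Nat.eq_one_of_dvd_one hdvd)
  · -- n ≥ 2
    have hn2 : 2 ≤ n := h2
    have hn0 : n ≠ 0 := by omega
    by_cases hcond : ∀ p ∈ n.primeFactors, m < p
    · -- all prime factors exceed m
      have hLpos : 0 < L m n := by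
        rw [L, if_neg (by omega : ¬ n ≤ 1), if_pos hcond]
        apply Finset.prod_pos
        intro p hp
        have hpp := Nat.prime_of_mem_primeFactors hp
        have := hcond p hp
        exact Nat.mul_pos (pow_pos hpp.pos _) (by omega)
      have hLlt := L_lt m n hm hn2
      rw [H_rec m n hm hn2, ih (L m n) hLlt hLpos]
      constructor
      · -- no bad prime divides L m n → no bad prime divides n
        intro hgood q hq hHq hqn
        have hqmem : q ∈ n.primeFactors := Nat.mem_primeFactors.2 ⟨hq, hqn, hn0⟩
        have hmq : m < q := hcond q hqmem
        have hHq' : H m (q - m) = 0 := by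
          rw [H_rec m q hm hq.two_le, L_prime_gt m q hq hmq] at hHq
          exact hHq
        have hqm1 : q - m ≠ 1 := by
          intro h; rw [h, H_one] at hHq'; omega
        have hqm2 : 2 ≤ q - m := by omega
        have hqmlt : q - m < n := by
          have := Nat.le_of_dvd hn hqn
          omega
        have hqmpos : 0 < q - m := by omega
        -- H m (q-m) = 0 ≠ 1, so some bad prime divides q - m
        have hnot : ¬ ∀ r : ℕ, r.Prime → H m r = 0 → ¬ r ∣ (q - m) := by
          intro hall
          have := (ih (q - m) hqmlt hqmpos).2 hall
          omega
        push_neg at hnot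
        obtain ⟨r, hr, hHr, hrdvd⟩ := hnot
        -- r divides L m n
        apply hgood r hr hHr
        have hdvd1 : (q - m) ∣ L m n := by
          rw [L, if_neg (by omega : ¬ n ≤ 1), if_pos hcond]
          exact Dvd.dvd.trans (dvd_mul_left _ _) (Finset.dvd_prod_of_mem _ hqmem)
        exact hrdvd.trans hdvd1
      · -- no bad prime divides n → no bad prime divides L m n
        intro hgood r hr hHr hrL
        rw [L, if_neg (by omega : ¬ n ≤ 1), if_pos hcond] at hrL
        obtain ⟨p, hpmem, hpdvd⟩ := (Nat.Prime.prime hr).exists_mem_finset_dvd hrL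
        have hpp := Nat.prime_of_mem_primeFactors hpmem
        have hmp : m < p := hcond p hpmem
        rcases (Nat.Prime.dvd_mul hr).1 hpdvd with hcase | hcase
        · -- r ∣ p^(α-1) so r = p
          have : r = p := (Nat.prime_dvd_prime_iff_eq hr hpp).1 (hr.dvd_of_dvd_pow hcase)
          subst this
          exact hgood r hr hHr (Nat.dvd_of_mem_primeFactors hpmem)
        · -- r ∣ p - m
          have hpm2 : 2 ≤ p - m := by
            have h2 : p - m ≠ 1 := by
              intro h; rw [h] at hcase; exact hr.one_lt.ne' (Nat.eq_one_of_dvd_one hcase)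
            omega
          have hpmlt : p - m < n := by
            have := Nat.le_of_dvd hn (Nat.dvd_of_mem_primeFactors hpmem)
            omega
          have hHpm : H m (p - m) ≠ 1 := by
            intro hone
            rw [ih (p - m) hpmlt (by omega)] at hone
            exact hone r hr hHr hcase
          have hHpm0 : H m (p - m) = 0 := by
            rcases H_mem m (p - m) hm with h | h
            · exact h
            · exact absurd h hHpm
          have hHp : H m p = 0 := by
            rw [H_rec m p hm hpp.two_le, L_prime_gt m p hpp hmp]
            exact hHpm0
          exact hgood p hpp hHp (Nat.dvd_of_mem_primeFactors hpmem)
    · -- some prime factor ≤ m: both sides false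
      push_neg at hcond
      obtain ⟨p, hpmem, hpm⟩ := hcond
      have hpp := Nat.prime_of_mem_primeFactors hpmem
      have hL0 : L m n = 0 := by
        rw [L, if_neg (by omega : ¬ n ≤ 1), if_neg]
        push_neg
        exact ⟨p, hpmem, hpm⟩
      have hH0 : H m n = 0 := by
        rw [H_rec m n hm hn2, hL0, H_zero]
      rw [hH0]
      simp only [zero_ne_one, false_iff, not_forall]
      refine ⟨p, hpp, ?_, by simp [Nat.dvd_of_mem_primeFactors hpmem]⟩
      rw [H_rec m p hm hpp.two_le, L_prime_le m p hpp hpm, H_zero]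
end

section
/- If m > 1 is an odd integer, then every positive integer n is D_m-deficient, i.e., D_m(n) < n. -/
open Finset

lemma L_lt_self {m n : ℕ} (hm : 0 < m) (hn : 2 ≤ n) : L m n < n := by
  unfold L
  rw [if_neg (by omega : ¬ n ≤ 1)]
  split_ifs with h2
  · have hn0 : n ≠ 0 := by omega
    conv_rhs => rw [← Nat.factorization_prod_pow_eq_self hn0]
    rw [Finsupp.prod, Nat.support_factorization]
    apply Finset.prod_lt_prod_of_nonempty
    · intro p hp
      have hp' := Nat.prime_of_mem_primeFactors hp
      have h3 := h2 p hp
      have h4 : 0 < p - m := by omega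
      have h5 : 0 < p := hp'.pos
      positivity
    · intro p hp
      have hp' := Nat.prime_of_mem_primeFactors hp
      have hmp := h2 p hp
      have hfp : 1 ≤ n.factorization p := (Nat.Prime.factorization_pos_of_dvd hp' hn0 (Nat.dvd_of_mem_primeFactors hp))
      calc p ^ (n.factorization p - 1) * (p - m)
          < p ^ (n.factorization p - 1) * p := by
            have h5 : 0 < p := hp'.pos
            exact mul_lt_mul_of_pos_left (by omega) (by positivity)
        _ = p ^ n.factorization p := by
            rw [← pow_succ]
            congr 1
            omega
    · exact Nat.nonempty_primeFactors.mpr (by omega)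
  · omega

lemma L_even {m n : ℕ} (hm : 1 < m) (hmo : Odd m) (hn : 2 ≤ n) (hL : L m n ≠ 0) :
    2 ∣ L m n := by
  unfold L at *
  rw [if_neg (by omega : ¬ n ≤ 1)] at *
  split_ifs at * with h2
  · obtain ⟨p, hp⟩ := Nat.nonempty_primeFactors.mpr (by omega : 1 < n)
    have hp' := Nat.prime_of_mem_primeFactors hp
    have hmp := h2 p hp
    have hpodd : Odd p := hp'.odd_of_ne_two (by omega)
    have h2pm : 2 ∣ p - m := by
      obtain ⟨a, ha⟩ := hpodd
      obtain ⟨b, hb⟩ := hmo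
      omega
    exact dvd_trans (Dvd.dvd.mul_left h2pm _) (Finset.dvd_prod_of_mem _ hp)
  · omega

lemma L_even_eq_zero {m a : ℕ} (hm : 1 < m) (ha : 2 ≤ a) (h2 : 2 ∣ a) :
    L m a = 0 := by
  unfold L
  rw [if_neg (by omega : ¬ a ≤ 1), if_neg]
  push_neg
  exact ⟨2, Nat.mem_primeFactors.mpr ⟨Nat.prime_two, h2, by omega⟩, by omega⟩

theorem Dm_deficient_of_odd (m : ℕ) (hm : 1 < m) (hmo : Odd m) :
    ∀ n : ℕ, 0 < n → D m n < n := by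
  intro n hn
  rcases eq_or_lt_of_le (show 1 ≤ n from hn) with h1 | h1
  · simp [D, ← h1]
  · have hn2 : 2 ≤ n := h1
    have hne1 : n ≠ 1 := by omega
    have halt : L m n < n := L_lt_self (by omega) hn2
    by_cases hsmall : L m n ≤ 1
    · have hR : R m n = 1 := by
        apply le_antisymm
        · apply Nat.sInf_le
          exact ⟨one_pos, by rw [Function.iterate_one]; omega⟩
        · exact le_csInf ⟨1, one_pos, by rw [Function.iterate_one]; omega⟩
            (fun k hk => hk.1)
      rw [D, if_neg hne1, hR]
      simp [Function.iterate_one]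
      omega
    · push_neg at hsmall
      have hdvd : 2 ∣ L m n := L_even hm hmo hn2 (by omega)
      have hLa : L m (L m n) = 0 := L_even_eq_zero hm hsmall hdvd
      have h2iter : (L m)^[2] n = 0 := by
        rw [show (2:ℕ) = 1 + 1 from rfl, Function.iterate_succ_apply',
          Function.iterate_one, hLa]
      have hR : R m n = 2 := by
        apply le_antisymm
        · exact Nat.sInf_le ⟨two_pos, Or.inl h2iter⟩
        · refine le_csInf ⟨2, two_pos, Or.inl h2iter⟩ ?_
          rintro k ⟨hk0, hk1⟩
          by_contra hlt
          have hk1' : k = 1 := by omega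
          rw [hk1', Function.iterate_one] at hk1
          omega
      rw [D, if_neg hne1, hR]
      have : Finset.Icc 1 2 = ({1, 2} : Finset ℕ) := by decide
      rw [this, Finset.sum_insert (by decide), Finset.sum_singleton,
        Function.iterate_one, h2iter]
      omega
end
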